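/- arXiv:2204.04699 — 4 statements merged into one kernel-verified Lean document; each statement's English description precedes it below -/
import Mathlib

section
/- Let V be a vector space of dimension 2m over a field K equipped with a nondegenerate alternating bilinear form. Then for any Lagrangian subspace α (i.e. α = α^⊥) and any isotropic subspace ξ (i.e. ξ ⊆ ξ^⊥): dim(α ∩ ξ^⊥) − dim(α ∩ ξ) = m − dim ξ = (dim ξ^⊥ − dim ξ)/2. -/
open Module

lemma orth_sup {K V : Type*} [Field K] [AddCommGroup V] [Module K V]
    (B : LinearMap.BilinForm K V) (U W : Submodule K V) :
    B.orthogonal (U ⊔ W) = B.orthogonal U ⊓ B.orthogonal W := by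
  apply le_antisymm
  · exact le_inf (B.orthogonal_le le_sup_left) (B.orthogonal_le le_sup_right)
  · rintro x ⟨hxU, hxW⟩ y hy
    obtain ⟨u, hu, w, hw, rfl⟩ := Submodule.mem_sup.mp hy
    simp only [LinearMap.BilinForm.IsOrtho, map_add, LinearMap.add_apply]
    rw [show (B u) x = 0 from hxU u hu, show (B w) x = 0 from hxW w hw, add_zero]

/-- In a symplectic space of dimension `2m`, for any Lagrangian subspace
`α` and any isotropic subspace `ξ`:
`dim(α ∩ ξ^⊥) − dim(α ∩ ξ) = m − dim ξ = (dim ξ^⊥ − dim ξ)/2`. -/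
theorem lagrangian_isotropic_identity {K V : Type*} [Field K] [AddCommGroup V]
    [Module K V] [FiniteDimensional K V]
    (B : LinearMap.BilinForm K V) (hB : B.Nondegenerate) (halt : B.IsAlt)
    (m : ℕ) (hdim : finrank K V = 2 * m)
    (α ξ : Submodule K V) (hα : α = B.orthogonal α) (hξ : ξ ≤ B.orthogonal ξ) :
    (finrank K (α ⊓ B.orthogonal ξ : Submodule K V) : ℤ)
          - finrank K (α ⊓ ξ : Submodule K V)
        = (m : ℤ) - finrank K ξ ∧
      (m : ℤ) - finrank K ξ = ((finrank K (B.orthogonal ξ) : ℤ) - finrank K ξ) / 2 := by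
  have hrefl : B.IsRefl := halt.isRefl
  have horthξ : finrank K (B.orthogonal ξ) = finrank K V - finrank K ξ :=
    B.finrank_orthogonal hB ξ
  have hξle : finrank K ξ ≤ finrank K V := Submodule.finrank_le ξ
  have hαm : finrank K α = m := by
    have := B.finrank_orthogonal hB α
    rw [← hα] at this
    omega
  -- dim ξ ≤ m since ξ ≤ ξ^⊥
  have hξm : finrank K ξ ≤ m := by
    have := Submodule.finrank_mono hξ
    omega
  -- α ⊓ ξ = orthogonal of (α ⊔ orthogonal ξ)
  have key : (α ⊓ ξ : Submodule K V) = B.orthogonal (α ⊔ B.orthogonal ξ) := by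
    rw [orth_sup, ← hα, B.orthogonal_orthogonal hB hrefl]
  have hdiminf : finrank K (α ⊓ ξ : Submodule K V)
      = finrank K V - finrank K (α ⊔ B.orthogonal ξ : Submodule K V) := by
    rw [key, B.finrank_orthogonal hB]
  have hsupinf := Submodule.finrank_sup_add_finrank_inf_eq α (B.orthogonal ξ)
  have hsuple : finrank K (α ⊔ B.orthogonal ξ : Submodule K V) ≤ finrank K V :=
    Submodule.finrank_le _
  constructor
  · omega
  · omega
end

section
/- Let P be a vector space over 𝔽₂ of dimension 2n equipped with a nondegenerate alternating bilinear form, and let S be an isotropic subspace (S ⊆ S^⊥) with dim S = n − k. Then for every subspace α of P: [dim((α ∩ S^⊥) + S) − dim S] + [dim((α^⊥ ∩ S^⊥) + S) − dim S] = 2k. -/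
open Module

private lemma orth_sup_s11 {P : Type*} [AddCommGroup P] [Module (ZMod 2) P]
    (B : LinearMap.BilinForm (ZMod 2) P) (A C : Submodule (ZMod 2) P) :
    B.orthogonal (A ⊔ C) = B.orthogonal A ⊓ B.orthogonal C := by
  ext x
  simp only [LinearMap.BilinForm.mem_orthogonal_iff, Submodule.mem_inf]
  constructor
  · intro h
    exact ⟨fun y hy => h y (Submodule.mem_sup_left hy),
           fun y hy => h y (Submodule.mem_sup_right hy)⟩
  · rintro ⟨h1, h2⟩ y hy
    rcases Submodule.mem_sup.mp hy with ⟨a, ha, c, hc, rfl⟩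
    have := h1 a ha
    have := h2 c hc
    simp [map_add, *]

/-- Cleaning Lemma for stabilizer codes, quantitative form.
For a `2n`-dimensional symplectic 𝔽₂-space `P` and an isotropic subspace `S` with
`dim S = n − k`, for every subspace `α`:
`[dim((α ∩ S^⊥) + S) − dim S] + [dim((α^⊥ ∩ S^⊥) + S) − dim S] = 2k`. -/
theorem cleaning_identity_stabilizer {P : Type*} [AddCommGroup P] [Module (ZMod 2) P]
    [FiniteDimensional (ZMod 2) P] (n k : ℕ) (hP : finrank (ZMod 2) P = 2 * n)
    (B : LinearMap.BilinForm (ZMod 2) P) (hB : B.Nondegenerate) (halt : B.IsAlt)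
    (S : Submodule (ZMod 2) P) (hS : S ≤ B.orthogonal S)
    (hdimS : (finrank (ZMod 2) S : ℤ) = (n : ℤ) - k)
    (α : Submodule (ZMod 2) P) :
    ((finrank (ZMod 2) ((α ⊓ B.orthogonal S) ⊔ S : Submodule (ZMod 2) P) : ℤ)
          - finrank (ZMod 2) S)
        + ((finrank (ZMod 2) ((B.orthogonal α ⊓ B.orthogonal S) ⊔ S :
              Submodule (ZMod 2) P) : ℤ) - finrank (ZMod 2) S)
      = 2 * k := by
  have hR : B.IsRefl := halt.isRefl
  have horth : ∀ W : Submodule (ZMod 2) P,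
      finrank (ZMod 2) (B.orthogonal W) + finrank (ZMod 2) W = 2 * n := by
    intro W
    have h1 := B.finrank_orthogonal hB W
    have h2 : finrank (ZMod 2) W ≤ finrank (ZMod 2) P := Submodule.finrank_le W
    omega
  -- abbreviations
  set oS := B.orthogonal S with hoS
  set oα := B.orthogonal α with hoα
  have hinf1 : (α ⊓ oS) ⊓ S = α ⊓ S := by
    rw [inf_assoc, inf_eq_right.mpr hS]
  have hinf2 : oα ⊓ oS = B.orthogonal (α ⊔ S) := (orth_sup_s11 B α S).symm
  have hSS : B.orthogonal oS = S := B.orthogonal_orthogonal hB hR S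
  have hinf3 : (oα ⊓ oS) ⊓ S = B.orthogonal (α ⊔ oS) := by
    rw [inf_assoc, inf_eq_right.mpr hS, hoα, ← hSS, orth_sup_s11]
  -- dimension equalities
  have e1 := Submodule.finrank_sup_add_finrank_inf_eq (α ⊓ oS) S
  rw [hinf1] at e1
  have e2 := Submodule.finrank_sup_add_finrank_inf_eq (oα ⊓ oS) S
  rw [hinf3] at e2
  have e3 := Submodule.finrank_sup_add_finrank_inf_eq α S
  have e4 := Submodule.finrank_sup_add_finrank_inf_eq α oS
  have e5 := horth (α ⊔ S)
  have e6 := horth (α ⊔ oS)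
  have e7 := horth S
  have e8 := horth α
  rw [← hinf2] at e5
  have hmono : α ⊓ oS ≤ α ⊓ oS := le_refl _
  -- need finrank (α ⊓ oS ⊓ ... ) relations; combine all with omega
  have e9 : finrank (ZMod 2) (oα ⊓ oS : Submodule (ZMod 2) P)
      + finrank (ZMod 2) (α ⊔ S : Submodule (ZMod 2) P) = 2 * n := e5
  have heq : finrank (ZMod 2) oS = finrank (ZMod 2) (B.orthogonal S) := rfl
  omega
end

section
/- Let P be a vector space over 𝔽₂ of dimension 2n with a nondegenerate alternating bilinear form, and let S be an isotropic subspace (S ⊆ S^⊥) with dim S = n − k. Let α be a subspace of P such that α ∩ S^⊥ ⊆ S. Then for every v ∈ S^⊥ there exists v' ∈ S^⊥ ∩ α^⊥ such that v − v' ∈ S. -/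
open Module

lemma orthogonal_sup_aux {K V : Type*} [Field K] [AddCommGroup V] [Module K V]
    (B : LinearMap.BilinForm K V) (X Y : Submodule K V) :
    B.orthogonal (X ⊔ Y) = B.orthogonal X ⊓ B.orthogonal Y := by
  apply le_antisymm
  · exact le_inf (B.orthogonal_le le_sup_left) (B.orthogonal_le le_sup_right)
  · rintro x ⟨hx1, hx2⟩ y hy
    obtain ⟨a, ha, b, hb, rfl⟩ := Submodule.mem_sup.mp hy
    have h1 := hx1 a ha
    have h2 := hx2 b hb
    simp only [LinearMap.BilinForm.isOrtho_def, map_add, LinearMap.add_apply] at *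
    rw [h1, h2, add_zero]

/-- Cleaning Lemma for stabilizer codes, qualitative form.
For a `2n`-dimensional symplectic 𝔽₂-space `P`, an isotropic subspace `S` with
`dim S = n − k`, and a subspace `α` with `α ∩ S^⊥ ⊆ S` (a correctable region),
every `v ∈ S^⊥` can be "cleaned": there is `v' ∈ S^⊥ ∩ α^⊥` with `v − v' ∈ S`. -/
theorem cleaning_lemma_stabilizer {P : Type*} [AddCommGroup P] [Module (ZMod 2) P]
    [FiniteDimensional (ZMod 2) P] (n k : ℕ) (hP : finrank (ZMod 2) P = 2 * n)
    (B : LinearMap.BilinForm (ZMod 2) P) (hB : B.Nondegenerate) (halt : B.IsAlt)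
    (S : Submodule (ZMod 2) P) (hS : S ≤ B.orthogonal S)
    (hdimS : (finrank (ZMod 2) S : ℤ) = (n : ℤ) - k)
    (α : Submodule (ZMod 2) P) (hcorr : α ⊓ B.orthogonal S ≤ S) :
    ∀ v ∈ B.orthogonal S, ∃ v' ∈ B.orthogonal S ⊓ B.orthogonal α, v - v' ∈ S := by
  have hrefl : B.IsRefl := halt.isRefl
  set T := B.orthogonal S with hT
  set W := S ⊔ (T ⊓ B.orthogonal α) with hW
  -- T ⊓ α = S ⊓ α
  have hTα : T ⊓ α = S ⊓ α := by
    apply le_antisymm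
    · exact le_inf (fun x hx => hcorr ⟨hx.2, hx.1⟩) inf_le_right
    · exact le_inf (fun x hx => hS hx.1) inf_le_right
  -- orthogonal dimension formula
  have hdim : ∀ X : Submodule (ZMod 2) P,
      finrank (ZMod 2) (B.orthogonal X) = finrank (ZMod 2) P - finrank (ZMod 2) X :=
    fun X => B.finrank_orthogonal hB X
  have hle : ∀ X : Submodule (ZMod 2) P, finrank (ZMod 2) X ≤ finrank (ZMod 2) P := fun X => X.finrank_le
  -- dim (T ⊔ B.orthogonal α)
  have h1 : finrank (ZMod 2) ↥(T ⊔ B.orthogonal α) + finrank (ZMod 2) ↥(S ⊓ α) = finrank (ZMod 2) P := by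
    have : B.orthogonal (T ⊔ B.orthogonal α) = S ⊓ α := by
      rw [orthogonal_sup_aux, hT, B.orthogonal_orthogonal hB hrefl,
        B.orthogonal_orthogonal hB hrefl]
    have h2 := hdim (T ⊔ B.orthogonal α)
    rw [this] at h2
    have := hle (T ⊔ B.orthogonal α)
    omega
  -- dim (S ⊔ B.orthogonal α)
  have h3 : finrank (ZMod 2) ↥(S ⊔ B.orthogonal α) + finrank (ZMod 2) ↥(S ⊓ α) = finrank (ZMod 2) P := by
    have : B.orthogonal (S ⊔ B.orthogonal α) = S ⊓ α := by
      rw [orthogonal_sup_aux, B.orthogonal_orthogonal hB hrefl, ← hT, hTα, inf_comm]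
    have h2 := hdim (S ⊔ B.orthogonal α)
    rw [this] at h2
    have := hle (S ⊔ B.orthogonal α)
    omega
  have hsupinf1 := Submodule.finrank_sup_add_finrank_inf_eq T (B.orthogonal α)
  have hsupinf2 := Submodule.finrank_sup_add_finrank_inf_eq S (B.orthogonal α)
  have hsupinf3 := Submodule.finrank_sup_add_finrank_inf_eq S (T ⊓ B.orthogonal α)
  have hSinf : S ⊓ (T ⊓ B.orthogonal α) = S ⊓ B.orthogonal α := by
    rw [← inf_assoc, inf_eq_left.2 hS]
  rw [hSinf] at hsupinf3
  have hdT : finrank (ZMod 2) T = finrank (ZMod 2) P - finrank (ZMod 2) S := hdim S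
  have hdα : finrank (ZMod 2) (B.orthogonal α) = finrank (ZMod 2) P - finrank (ZMod 2) α := hdim α
  have hleS := hle S
  have hleα := hle α
  -- conclude finrank W = finrank T
  have hWT : finrank (ZMod 2) W = finrank (ZMod 2) T := by
    rw [hW]
    omega
  have hWleT : W ≤ T := sup_le hS inf_le_left
  have hEq : W = T := Submodule.eq_of_le_of_finrank_le hWleT (le_of_eq hWT.symm)
  intro v hv
  rw [← hEq] at hv
  obtain ⟨s, hs, w, hw, hsw⟩ := Submodule.mem_sup.mp hv
  exact ⟨w, hw, by rw [← hsw]; simpa using hs⟩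
end

section
/- Let n = 2r be even and let ξ, η be subspaces of 𝔽₂ⁿ with ξ ⊆ η^⊥ (orthogonality with respect to the standard bilinear form ⟨u,v⟩ = Σᵢ uᵢvᵢ), and set k = n − dim ξ − dim η. Let α be a subspace of 𝔽₂ⁿ with α = α^⊥. Then [dim((η^⊥ ∩ α) + ξ) − dim ξ] + [dim((ξ^⊥ ∩ α) + η) − dim η] = k. (In particular, any self-orthogonal subspace α contains representatives of k independent logical operators of any CSS code of length n and dimension k.) -/
open Module

/-- The standard bilinear form `⟨u,v⟩ = ∑ i, uᵢ vᵢ` on `𝔽₂ⁿ`. -/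
def stdBilinForm (n : ℕ) : LinearMap.BilinForm (ZMod 2) (Fin n → ZMod 2) :=
  LinearMap.mk₂ (ZMod 2) (fun u v => ∑ i, u i * v i)
    (fun u u' v => by simp [add_mul, Finset.sum_add_distrib])
    (fun c u v => by simp [Finset.mul_sum, mul_assoc])
    (fun u v v' => by simp [mul_add, Finset.sum_add_distrib])
    (fun c u v => by simp [Finset.mul_sum, mul_left_comm])

lemma stdBilinForm_apply {n : ℕ} (u v : Fin n → ZMod 2) :
    stdBilinForm n u v = ∑ i, u i * v i := rfl

lemma stdBilinForm_isSymm (n : ℕ) : (stdBilinForm n).IsSymm := by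
  rw [LinearMap.BilinForm.isSymm_def]
  intro u v
  simp [stdBilinForm_apply, mul_comm]

lemma stdBilinForm_isRefl (n : ℕ) : (stdBilinForm n).IsRefl :=
  (stdBilinForm_isSymm n).isRefl

lemma stdBilinForm_nondegenerate (n : ℕ) : (stdBilinForm n).Nondegenerate := by
  apply (LinearMap.IsRefl.nondegenerate_iff_separatingLeft (stdBilinForm_isRefl n)).mpr
  intro u hu
  funext i
  have := hu (Pi.single i 1)
  simpa [stdBilinForm_apply, Pi.single_apply, Finset.mul_sum, mul_comm] using this

lemma orthogonal_sup {K V : Type*} [Field K] [AddCommGroup V] [Module K V]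
    (B : LinearMap.BilinForm K V) (A C : Submodule K V) :
    B.orthogonal (A ⊔ C) = B.orthogonal A ⊓ B.orthogonal C := by
  apply le_antisymm
  · exact le_inf (B.orthogonal_le le_sup_left) (B.orthogonal_le le_sup_right)
  · rintro x ⟨hxA, hxC⟩ v hv
    obtain ⟨a, ha, c, hc, rfl⟩ := Submodule.mem_sup.mp hv
    have h1 := hxA a ha
    have h2 := hxC c hc
    simp only [LinearMap.BilinForm.IsOrtho, map_add, LinearMap.add_apply] at *
    rw [h1, h2, add_zero]

/-- Let `n = 2r`, let `ξ, η ⊆ 𝔽₂ⁿ` with `ξ ⊆ η^⊥` (standard bilinear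
form), `k = n − dim ξ − dim η`, and let `α` be a self-orthogonal subspace `α = α^⊥`. Then
`[dim((η^⊥ ∩ α) + ξ) − dim ξ] + [dim((ξ^⊥ ∩ α) + η) − dim η] = k`. -/
theorem logical_operators_in_self_orthogonal {n r : ℕ} (hn : n = 2 * r)
    (ξ η : Submodule (ZMod 2) (Fin n → ZMod 2))
    (hξη : ξ ≤ (stdBilinForm n).orthogonal η)
    (k : ℤ)
    (hk : k = (n : ℤ) - finrank (ZMod 2) ξ - finrank (ZMod 2) η)
    (α : Submodule (ZMod 2) (Fin n → ZMod 2))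
    (hα : α = (stdBilinForm n).orthogonal α) :
    ((finrank (ZMod 2) (((stdBilinForm n).orthogonal η ⊓ α) ⊔ ξ :
          Submodule (ZMod 2) (Fin n → ZMod 2)) : ℤ) - finrank (ZMod 2) ξ)
        + ((finrank (ZMod 2) (((stdBilinForm n).orthogonal ξ ⊓ α) ⊔ η :
              Submodule (ZMod 2) (Fin n → ZMod 2)) : ℤ) - finrank (ZMod 2) η)
      = k := by
  set B := stdBilinForm n
  have hrefl := stdBilinForm_isRefl n
  have hnd := stdBilinForm_nondegenerate n
  have hdouble : ∀ W : Submodule (ZMod 2) (Fin n → ZMod 2),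
      B.orthogonal (B.orthogonal W) = W :=
    fun W => B.orthogonal_orthogonal hnd hrefl W
  -- η ≤ ξ^⊥
  have hηξ : η ≤ B.orthogonal ξ := by
    intro y hy x hx
    exact hrefl y x (hξη hx y hy)
  -- key: orthogonal of the first space equals the second space
  have key : B.orthogonal ((B.orthogonal η ⊓ α) ⊔ ξ) = (B.orthogonal ξ ⊓ α) ⊔ η := by
    have hinf : B.orthogonal (B.orthogonal η ⊓ α) = η ⊔ α := by
      have := orthogonal_sup B η α
      calc B.orthogonal (B.orthogonal η ⊓ α)
          = B.orthogonal (B.orthogonal η ⊓ B.orthogonal α) := by rw [← hα]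
        _ = B.orthogonal (B.orthogonal (η ⊔ α)) := by rw [orthogonal_sup]
        _ = η ⊔ α := hdouble _
    calc B.orthogonal ((B.orthogonal η ⊓ α) ⊔ ξ)
        = B.orthogonal (B.orthogonal η ⊓ α) ⊓ B.orthogonal ξ := orthogonal_sup B _ _
      _ = (η ⊔ α) ⊓ B.orthogonal ξ := by rw [hinf]
      _ = B.orthogonal ξ ⊓ (α ⊔ η) := by rw [inf_comm, sup_comm]
      _ = (B.orthogonal ξ ⊓ α) ⊔ η := (inf_sup_assoc_of_le _ hηξ).symm
  have hdim : ∀ W : Submodule (ZMod 2) (Fin n → ZMod 2),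
      finrank (ZMod 2) W + finrank (ZMod 2) (B.orthogonal W) = n := by
    intro W
    have := LinearMap.BilinForm.finrank_add_finrank_orthogonal hrefl W
    rw [LinearMap.BilinForm.orthogonal_top_eq_bot hnd, inf_bot_eq, finrank_bot, add_zero] at this
    simpa [Module.finrank_fintype_fun_eq_card] using this
  have := hdim ((B.orthogonal η ⊓ α) ⊔ ξ)
  rw [key] at this
  rw [hk]
  push_cast [← this]
  ring
end
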